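/- Let Q be a finite connected quiver without loops or 2-cycles such that every arrow lies in at least one chordless cycle and whose dual graph is a tree. Then every arrow of Q lies in either exactly one or exactly two chordless cycles. -/

import Mathlib

section DimerTreeQuiver

variable (V A : Type) [Fintype V] [DecidableEq V] [Fintype A] [DecidableEq A]

/-- The list of arrows `L` is a cyclic path (each arrow's target is the next arrow's
source, cyclically) visiting pairwise distinct vertices, and it is *chordless*: the
full subquiver of `(V,A,s,t)` on the vertices of `L` consists exactly of the arrows
of `L`. -/
def IsChordlessCycleList (s t : A → V) (L : List A) : Prop :=
  L ≠ [] ∧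
  L.Chain' (fun a b => t a = s b) ∧
  (∀ a b, L.head? = some a → L.getLast? = some b → t b = s a) ∧
  (L.map s).Nodup ∧
  ∀ a : A, s a ∈ L.map s → t a ∈ L.map s → a ∈ L

/-- A chordless cycle of the quiver `(V,A,s,t)`, recorded as the (finite) set of its
arrows: some cyclic ordering of the arrows of `c` is a chordless cyclic path. -/
def IsChordlessCycle (s t : A → V) (c : Finset A) : Prop :=
  ∃ L : List A, L.toFinset = c ∧ L.Nodup ∧ IsChordlessCycleList V A s t L

/-- An arrow is a boundary arrow if it lies in exactly one chordless cycle. -/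
def IsBoundaryArrow (s t : A → V) (a : A) : Prop :=
  {c : Finset A | IsChordlessCycle V A s t c ∧ a ∈ c}.ncard = 1

/-- The vertex set of the dual graph of the quiver: chordless cycles together with
boundary arrows. -/
def DualVertex (s t : A → V) : Type :=
  {c : Finset A // IsChordlessCycle V A s t c} ⊕ {a : A // IsBoundaryArrow V A s t a}

/-- Adjacency of the dual graph: two distinct chordless cycles are adjacent iff they
share an arrow (a trunk edge); a chordless cycle and a boundary arrow are adjacent
iff the arrow is contained in the cycle (a leaf branch). -/
def DualAdj (s t : A → V) : DualVertex V A s t → DualVertex V A s t → Prop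
  | Sum.inl c, Sum.inl c' => c ≠ c' ∧ (c.1 ∩ c'.1).Nonempty
  | Sum.inl c, Sum.inr a => a.1 ∈ c.1
  | Sum.inr a, Sum.inl c => a.1 ∈ c.1
  | Sum.inr _, Sum.inr _ => False

/-- The dual graph of the quiver `(V,A,s,t)`. -/
def dualGraph (s t : A → V) : SimpleGraph (DualVertex V A s t) where
  Adj := DualAdj V A s t
  symm := by
    constructor
    rintro (c | a) (c' | a') h <;> simp only [DualAdj] at h ⊢
    · exact ⟨h.1.symm, by rw [Finset.inter_comm]; exact h.2⟩
    · exact h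
    · exact h
  loopless := by
    constructor
    rintro (c | a) h <;> simp only [DualAdj] at h
    exact h.1 rfl

/-- The underlying (simple) graph of the quiver, used to express connectedness. -/
def underlyingGraph (s t : A → V) : SimpleGraph V where
  Adj u v := u ≠ v ∧ ∃ a, (s a = u ∧ t a = v) ∨ (s a = v ∧ t a = u)
  symm := by
    constructor
    rintro u v ⟨h, a, h'⟩
    exact ⟨h.symm, a, h'.symm⟩
  loopless := by
    constructor
    rintro u ⟨h, _⟩
    exact h rfl

end DimerTreeQuiver


/-- Let `Q = (V,A,s,t)` be a finite connected quiver without loops or 2-cycles such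
that every arrow lies in at least one chordless cycle and whose dual graph is a tree.
Then every arrow of `Q` lies in either exactly one or exactly two chordless cycles. -/
theorem arrow_in_one_or_two_cycles (V A : Type) [Fintype V] [DecidableEq V] [Fintype A] [DecidableEq A]
    (s t : A → V)
    (hconn : (underlyingGraph V A s t).Connected)
    (hnoloop : ∀ a, s a ≠ t a)
    (hno2cycle : ¬ ∃ a b : A, t a = s b ∧ t b = s a)
    (hcover : ∀ a : A, ∃ c : Finset A, IsChordlessCycle V A s t c ∧ a ∈ c)
    (htree : (dualGraph V A s t).IsTree) :
    ∀ a : A, {c : Finset A | IsChordlessCycle V A s t c ∧ a ∈ c}.ncard = 1 ∨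
      {c : Finset A | IsChordlessCycle V A s t c ∧ a ∈ c}.ncard = 2 := by
  intro a
  set S := {c : Finset A | IsChordlessCycle V A s t c ∧ a ∈ c} with hS
  have hfin : S.Finite := Set.toFinite _
  have hpos : 1 ≤ S.ncard := by
    obtain ⟨c, hc⟩ := hcover a
    have : c ∈ S := hc
    have := Set.ncard_pos hfin |>.mpr ⟨c, this⟩
    omega
  by_contra h
  push_neg at h
  have h3 : 2 < S.ncard := by omega
  obtain ⟨c1, hc1, c2, hc2, c3, hc3, h12, h13, h23⟩ := (Set.two_lt_ncard hfin).mp h3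
  -- build triangle in dual graph
  let v1 : DualVertex V A s t := Sum.inl ⟨c1, hc1.1⟩
  let v2 : DualVertex V A s t := Sum.inl ⟨c2, hc2.1⟩
  let v3 : DualVertex V A s t := Sum.inl ⟨c3, hc3.1⟩
  have adj : ∀ (c c' : Finset A) (h : IsChordlessCycle V A s t c) (h' : IsChordlessCycle V A s t c'),
      a ∈ c → a ∈ c' → c ≠ c' →
      (dualGraph V A s t).Adj (Sum.inl ⟨c, h⟩) (Sum.inl ⟨c', h'⟩) := by
    intro c c' h h' ha ha' hne
    exact ⟨by simp [hne], ⟨a, Finset.mem_inter.mpr ⟨ha, ha'⟩⟩⟩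
  have a12 := adj c1 c2 hc1.1 hc2.1 hc1.2 hc2.2 h12
  have a23 := adj c2 c3 hc2.1 hc3.1 hc2.2 hc3.2 h23
  have a31 := adj c3 c1 hc3.1 hc1.1 hc3.2 hc1.2 (Ne.symm h13)
  let w : (dualGraph V A s t).Walk v1 v1 :=
    .cons a12 (.cons a23 (.cons a31 .nil))
  let f : DualVertex V A s t → Finset A := Sum.elim (fun c => c.1) (fun _ => ∅)
  have hv12 : v1 ≠ v2 := fun h => h12 (congrArg f h)
  have hv13 : v1 ≠ v3 := fun h => h13 (congrArg f h)
  have hv23 : v2 ≠ v3 := fun h => h23 (congrArg f h)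
  have hcyc : w.IsCycle := by
    rw [SimpleGraph.Walk.isCycle_def]
    refine ⟨⟨by change [s(v1, v2), s(v2, v3), s(v3, v1)].Nodup; simp [w, SimpleGraph.Walk.isTrail_def, Sym2.eq_iff, hv12, hv13, hv23,
      hv12.symm, hv13.symm, hv23.symm]⟩, ?_, ?_⟩
    · nofun
    · change [v2, v3, v1].Nodup; simp [w, hv12, hv13, hv23, hv12.symm, hv13.symm, hv23.symm]
  exact htree.2 w hcyc
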